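/- arXiv:1603.07220 — 4 statements merged into one kernel-verified Lean document; each statement's English description precedes it below -/
import Mathlib

section
/- The radius of convergence of the power series Σ_{p≥0} C_p^{(D+1)} z^p, where C_p^{(D+1)} are the Fuss–Catalan numbers, equals z_c = D^D / (D+1)^{D+1}. -/
open Finset Filter Topology Nat

lemma factorial_add_prod (n k : ℕ) :
    (n + k)! = n ! * ∏ i ∈ Finset.range k, (n + 1 + i) := by
  induction k with
  | zero => simp
  | succ k ih =>
      rw [Finset.prod_range_succ, ← mul_assoc, ← ih, ← Nat.add_assoc, Nat.factorial_succ]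
      ring


/-- Fuss–Catalan numbers `C_p = (1/((D+1)p+1)) * choose((D+1)p+1, p)` as reals. -/
noncomputable def fussCatalan (D p : ℕ) : ℝ :=
  (1 / (((D + 1) * p + 1 : ℕ) : ℝ)) * (Nat.choose ((D + 1) * p + 1) p : ℝ)

lemma fussCatalan_eq (D p : ℕ) :
    fussCatalan D p = (((D + 1) * p)! : ℝ) / ((p ! : ℝ) * ((D * p + 1)! : ℝ)) := by
  have hle : p ≤ (D + 1) * p + 1 := by nlinarith [Nat.zero_le (D * p)]
  have hsub : (D + 1) * p + 1 - p = D * p + 1 := by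
    have : (D + 1) * p = D * p + p := by ring
    omega
  have hkey := Nat.choose_mul_factorial_mul_factorial hle
  rw [hsub] at hkey
  have hfac : ((D + 1) * p + 1)! = ((D + 1) * p + 1) * ((D + 1) * p)! := Nat.factorial_succ _
  have hkeyR : ((Nat.choose ((D + 1) * p + 1) p : ℝ)) * (p ! : ℝ) * ((D * p + 1)! : ℝ)
      = (((D + 1) * p + 1 : ℕ) : ℝ) * (((D + 1) * p)! : ℝ) := by
    rw [hfac] at hkey
    exact_mod_cast congrArg (Nat.cast : ℕ → ℝ) hkey
  have h1 : ((((D + 1) * p + 1 : ℕ)) : ℝ) ≠ 0 := by positivity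
  have h2 : (p ! : ℝ) ≠ 0 := by positivity
  have h3 : ((D * p + 1)! : ℝ) ≠ 0 := by positivity
  unfold fussCatalan
  field_simp
  push_cast at hkeyR ⊢
  linarith [hkeyR]

lemma fussCatalan_pos (D p : ℕ) : 0 < fussCatalan D p := by
  rw [fussCatalan_eq]
  positivity

lemma fussCatalan_ratio (D p : ℕ) :
    fussCatalan D (p + 1) / fussCatalan D p =
      ((∏ i ∈ Finset.range (D + 1), ((D + 1) * p + 1 + i) : ℕ) : ℝ) /
        (((p : ℝ) + 1) * ((∏ i ∈ Finset.range D, (D * p + 2 + i) : ℕ) : ℝ)) := by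
  have hA : ((D + 1) * (p + 1))!
      = ((D + 1) * p)! * ∏ i ∈ Finset.range (D + 1), ((D + 1) * p + 1 + i) := by
    have h1 : (D + 1) * (p + 1) = (D + 1) * p + (D + 1) := by ring
    rw [h1, factorial_add_prod]
  have hC : (D * (p + 1) + 1)! = (D * p + 1)! * ∏ i ∈ Finset.range D, (D * p + 2 + i) := by
    have h1 : D * (p + 1) + 1 = (D * p + 1) + D := by ring
    rw [h1, factorial_add_prod]
  have h2 : (p ! : ℝ) ≠ 0 := by positivity
  have h3 : ((D * p + 1)! : ℝ) ≠ 0 := by positivity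
  have h6 : ((((D + 1) * p))! : ℝ) ≠ 0 := by positivity
  have h4 : ((∏ i ∈ Finset.range D, (D * p + 2 + i) : ℕ) : ℝ) ≠ 0 := by
    have : 0 < ∏ i ∈ Finset.range D, (D * p + 2 + i) :=
      Finset.prod_pos fun i _ => by omega
    exact_mod_cast this.ne'
  have h7 : ((p : ℝ) + 1) ≠ 0 := by positivity
  rw [fussCatalan_eq, fussCatalan_eq, hA, hC, Nat.factorial_succ]
  push_cast
  field_simp

lemma tendsto_linear_div (a b : ℕ) :
    Tendsto (fun p : ℕ => ((a * p + b : ℕ) : ℝ) / (p : ℝ)) atTop (𝓝 (a : ℝ)) := by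
  have h : Tendsto (fun p : ℕ => (a : ℝ) + (b : ℝ) * (1 / (p : ℝ))) atTop
      (𝓝 ((a : ℝ) + (b : ℝ) * 0)) :=
    tendsto_const_nhds.add (tendsto_const_nhds.mul tendsto_one_div_atTop_nhds_zero_nat)
  rw [mul_zero, add_zero] at h
  refine h.congr' ?_
  filter_upwards [eventually_ge_atTop 1] with p hp
  have hp' : (p : ℝ) ≠ 0 := Nat.cast_ne_zero.mpr (by omega)
  push_cast
  field_simp

lemma tendsto_prod_div (a b k : ℕ) :
    Tendsto (fun p : ℕ => ((∏ i ∈ Finset.range k, (a * p + b + i) : ℕ) : ℝ) / (p : ℝ) ^ k)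
      atTop (𝓝 ((a : ℝ) ^ k)) := by
  have h : Tendsto (fun p : ℕ => ∏ i ∈ Finset.range k, ((a * p + (b + i) : ℕ) : ℝ) / (p : ℝ))
      atTop (𝓝 (∏ _i ∈ Finset.range k, (a : ℝ))) :=
    tendsto_finset_prod _ fun i _ => tendsto_linear_div a (b + i)
  rw [Finset.prod_const, Finset.card_range] at h
  refine h.congr' ?_
  filter_upwards [eventually_ge_atTop 1] with p hp
  rw [Finset.prod_div_distrib, Finset.prod_const, Finset.card_range]
  push_cast
  refine congrArg (· / _) (Finset.prod_congr rfl fun i _ => by ring)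

lemma tendsto_ratio (D : ℕ) (hD : 1 ≤ D) :
    Tendsto (fun p : ℕ =>
        ((∏ i ∈ Finset.range (D + 1), ((D + 1) * p + 1 + i) : ℕ) : ℝ) /
          (((p : ℝ) + 1) * ((∏ i ∈ Finset.range D, (D * p + 2 + i) : ℕ) : ℝ)))
      atTop (𝓝 (((D : ℝ) + 1) ^ (D + 1) / (D : ℝ) ^ D)) := by
  have hnum := tendsto_prod_div (D + 1) 1 (D + 1)
  push_cast at hnum
  have hDpos : (0:ℝ) < (D:ℝ) := by exact_mod_cast hD
  have hB := tendsto_prod_div D 2 D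
  have hone : Tendsto (fun p : ℕ => ((p : ℝ) + 1) / (p : ℝ)) atTop (𝓝 1) := by
    have := tendsto_linear_div 1 1
    simp only [one_mul, Nat.cast_one] at this
    refine this.congr fun p => by push_cast; ring_nf
  have hden : Tendsto (fun p : ℕ =>
      (((p : ℝ) + 1) * ((∏ i ∈ Finset.range D, (D * p + 2 + i) : ℕ) : ℝ)) / (p : ℝ) ^ (D + 1))
      atTop (𝓝 ((D : ℝ) ^ D)) := by
    have h := hone.mul hB
    rw [one_mul] at h
    refine h.congr' ?_
    filter_upwards [eventually_ge_atTop 1] with p hp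
    have hp' : (p : ℝ) ≠ 0 := Nat.cast_ne_zero.mpr (by omega)
    rw [pow_succ]
    field_simp
  have h := hnum.div hden (by positivity)
  refine h.congr' ?_
  filter_upwards [eventually_ge_atTop 1] with p hp
  have hp' : (p : ℝ) ^ (D + 1) ≠ 0 := by
    have : (p : ℝ) ≠ 0 := Nat.cast_ne_zero.mpr (by omega)
    positivity
  simp only [Pi.div_apply]
  rw [div_div_div_cancel_right₀ hp']
  push_cast
  ring_nf

lemma tendsto_fc_ratio (D : ℕ) (hD : 1 ≤ D) {r : ℝ} (hr : 0 < r) :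
    Tendsto (fun p : ℕ =>
        ‖fussCatalan D (p + 1) * r ^ (p + 1)‖ / ‖fussCatalan D p * r ^ p‖) atTop
      (𝓝 ((((D : ℝ) + 1) ^ (D + 1) / (D : ℝ) ^ D) * r)) := by
  have h := (tendsto_ratio D hD).mul_const r
  refine h.congr fun p => ?_
  have h1 := fussCatalan_pos D p
  have h2 := fussCatalan_pos D (p + 1)
  have h3 : (0:ℝ) < r ^ p := pow_pos hr p
  rw [Real.norm_eq_abs, Real.norm_eq_abs, abs_of_pos (by positivity),
    abs_of_pos (by positivity), ← fussCatalan_ratio, pow_succ]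
  field_simp

lemma fc_summable (D : ℕ) (hD : 1 ≤ D) {r : ℝ} (h0 : 0 ≤ r)
    (hr : r < (D : ℝ) ^ D / ((D : ℝ) + 1) ^ (D + 1)) :
    Summable (fun p : ℕ => fussCatalan D p * r ^ p) := by
  rcases h0.eq_or_lt with h | h
  · refine summable_of_ne_finset_zero (s := {0}) fun p hp => ?_
    simp only [Finset.mem_singleton] at hp
    rw [← h, zero_pow hp, mul_zero]
  · have hDpos : (0:ℝ) < (D:ℝ) := by exact_mod_cast hD
    have hLz : (((D : ℝ) + 1) ^ (D + 1) / (D : ℝ) ^ D) *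
        ((D : ℝ) ^ D / ((D : ℝ) + 1) ^ (D + 1)) = 1 := by
      field_simp
    refine summable_of_ratio_test_tendsto_lt_one (l :=
      (((D : ℝ) + 1) ^ (D + 1) / (D : ℝ) ^ D) * r) ?_ ?_ (tendsto_fc_ratio D hD h)
    · calc (((D : ℝ) + 1) ^ (D + 1) / (D : ℝ) ^ D) * r
          < (((D : ℝ) + 1) ^ (D + 1) / (D : ℝ) ^ D) *
            ((D : ℝ) ^ D / ((D : ℝ) + 1) ^ (D + 1)) := by
            apply mul_lt_mul_of_pos_left hr (by positivity)
        _ = 1 := hLz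
    · exact Eventually.of_forall fun p =>
        (mul_pos (fussCatalan_pos D p) (pow_pos h p)).ne'

lemma fc_not_summable (D : ℕ) (hD : 1 ≤ D) {r : ℝ}
    (hr : (D : ℝ) ^ D / ((D : ℝ) + 1) ^ (D + 1) < r) :
    ¬ Summable (fun p : ℕ => fussCatalan D p * r ^ p) := by
  have hDpos : (0:ℝ) < (D:ℝ) := by exact_mod_cast hD
  have hzc : (0:ℝ) < (D : ℝ) ^ D / ((D : ℝ) + 1) ^ (D + 1) := by positivity
  have hLz : (((D : ℝ) + 1) ^ (D + 1) / (D : ℝ) ^ D) *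
      ((D : ℝ) ^ D / ((D : ℝ) + 1) ^ (D + 1)) = 1 := by field_simp
  refine not_summable_of_ratio_test_tendsto_gt_one (l :=
    (((D : ℝ) + 1) ^ (D + 1) / (D : ℝ) ^ D) * r) ?_ (tendsto_fc_ratio D hD (hzc.trans hr))
  calc (1:ℝ) = (((D : ℝ) + 1) ^ (D + 1) / (D : ℝ) ^ D) *
        ((D : ℝ) ^ D / ((D : ℝ) + 1) ^ (D + 1)) := hLz.symm
    _ < (((D : ℝ) + 1) ^ (D + 1) / (D : ℝ) ^ D) * r :=
        mul_lt_mul_of_pos_left hr (by positivity)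


/-- The radius of convergence of `Σ_p C_p^{(D+1)} z^p`, defined as the supremum of
the `r ≥ 0` for which the series converges, equals `z_c = D^D / (D+1)^{D+1}`. -/
theorem fussCatalan_radius_of_convergence (D : ℕ) (hD : 1 ≤ D) :
    sSup {r : ℝ | 0 ≤ r ∧ Summable (fun p : ℕ => fussCatalan D p * r ^ p)} =
      (D : ℝ) ^ D / ((D : ℝ) + 1) ^ (D + 1) := by
  have hDpos : (0:ℝ) < (D:ℝ) := by exact_mod_cast hD
  have hzc : (0:ℝ) < (D : ℝ) ^ D / ((D : ℝ) + 1) ^ (D + 1) := by positivity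
  apply csSup_eq_of_forall_le_of_forall_lt_exists_gt
  · exact ⟨0, le_refl 0, fc_summable D hD le_rfl hzc⟩
  · intro a ha
    by_contra hc
    push_neg at hc
    exact fc_not_summable D hD hc ha.2
  · intro w hw
    rcases lt_or_ge w 0 with h | h
    · exact ⟨0, ⟨le_refl 0, fc_summable D hD le_rfl hzc⟩, h⟩
    · refine ⟨(w + (D : ℝ) ^ D / ((D : ℝ) + 1) ^ (D + 1)) / 2,
        ⟨by linarith, fc_summable D hD (by linarith) (by linarith)⟩, by linarith⟩
end

section
/- The bubble bracket [L_{(B₁,v̄₁)}, L_{(B₂,v̄₂)}] = Σ_{v∈B₁} L_{(B₁⋆_{(v,v̄₂)}B₂, v̄₁)} − Σ_{v∈B₂} L_{(B₂⋆_{(v,v̄₁)}B₁, v̄₂)}, extended bilinearly, satisfies the Jacobi identity, so the free real vector space on marked D-colored graphs equipped with this bracket is a Lie algebra. -/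
/-- An abstract contraction system of marked `D`-colored graphs: `M` is the set of
marked graphs `(B, v̄)`, `Pos a` the (finite) set of positive vertices of `a`, and
`star a b v = B_a ⋆_{(v, v̄_b)} B_b` (keeping the mark of `a`) the graph contraction.
`vertEquiv` identifies the positive vertices of a contraction with the surviving
vertices of the two pieces; `assoc` is the associativity
`(B₁⋆B₂)⋆B₃ = B₁⋆(B₂⋆B₃)` of contraction, and `comm` states that contractions at
distinct vertices of `B₁` commute. -/
structure ContractionSystem where
  M : Type
  Pos : M → Type
  [finPos : ∀ a, Fintype (Pos a)]
  star : (a : M) → M → Pos a → M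
  vertEquiv : (a : M) → (b : M) → (v : Pos a) →
    Pos (star a b v) ≃ ({u : Pos a // u ≠ v} ⊕ Pos b)
  assoc : ∀ (a b c : M) (v : Pos a) (w : Pos b),
    star (star a b v) c ((vertEquiv a b v).symm (Sum.inr w)) = star a (star b c w) v
  comm : ∀ (a b c : M) (v u : Pos a) (h : u ≠ v),
    star (star a b v) c ((vertEquiv a b v).symm (Sum.inl ⟨u, h⟩)) =
      star (star a c u) b ((vertEquiv a c u).symm (Sum.inl ⟨v, Ne.symm h⟩))

attribute [instance] ContractionSystem.finPos

/-- The bubble bracket on generators: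
`[L_a, L_b] = Σ_{v∈B_a} L_{B_a⋆_{(v,v̄_b)}B_b} − Σ_{v∈B_b} L_{B_b⋆_{(v,v̄_a)}B_a}`. -/
noncomputable def ContractionSystem.brkt (S : ContractionSystem) (a b : S.M) : S.M →₀ ℝ :=
  (∑ v : S.Pos a, Finsupp.single (S.star a b v) (1 : ℝ)) -
    (∑ v : S.Pos b, Finsupp.single (S.star b a v) (1 : ℝ))

/-- The bilinear extension of the bubble bracket to the free real vector space on
marked `D`-colored graphs. -/
noncomputable def ContractionSystem.bra (S : ContractionSystem) (x y : S.M →₀ ℝ) : S.M →₀ ℝ :=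
  x.sum fun a ca => y.sum fun b cb => (ca * cb) • S.brkt a b

namespace ContractionSystem

open Finsupp

variable (S : ContractionSystem)

/-- One-sided sum of singles. -/
noncomputable def P (a b : S.M) : S.M →₀ ℝ :=
  ∑ v : S.Pos a, Finsupp.single (S.star a b v) (1 : ℝ)

lemma brkt_eq (a b : S.M) : S.brkt a b = S.P a b - S.P b a := rfl

lemma brkt_anti (a b : S.M) : S.brkt a b = - S.brkt b a := by
  rw [brkt_eq, brkt_eq, neg_sub]

/-- The bracket as a bilinear map. -/
noncomputable def Bmap : (S.M →₀ ℝ) →ₗ[ℝ] (S.M →₀ ℝ) →ₗ[ℝ] (S.M →₀ ℝ) :=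
  Finsupp.lsum ℝ fun a => LinearMap.toSpanSingleton ℝ _
    (Finsupp.lsum ℝ fun b => LinearMap.toSpanSingleton ℝ _ (S.brkt a b))

lemma bra_eq (x y : S.M →₀ ℝ) : S.bra x y = S.Bmap x y := by
  simp only [bra, Bmap, Finsupp.lsum_apply, Finsupp.sum, LinearMap.coe_sum,
    Finset.sum_apply, LinearMap.smul_apply, LinearMap.toSpanSingleton_apply,
    Finset.smul_sum, smul_smul]

lemma Bmap_single_single (a b : S.M) :
    S.Bmap (Finsupp.single a 1) (Finsupp.single b 1) = S.brkt a b := by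
  simp [Bmap]

open scoped Classical in
/-- Double-contraction term (both contractions at vertices of `a`). -/
noncomputable def Dp (a b c : S.M) (v u : S.Pos a) : S.M →₀ ℝ :=
  if h : u ≠ v then
    Finsupp.single (S.star (S.star a b v) c ((S.vertEquiv a b v).symm (Sum.inl ⟨u, h⟩))) (1 : ℝ)
  else 0

lemma Dp_symm (a b c : S.M) (v u : S.Pos a) : S.Dp a b c v u = S.Dp a c b u v := by
  unfold Dp
  by_cases h : u = v
  · subst h; simp
  · rw [dif_pos h, dif_pos (Ne.symm h), S.comm a b c v u h]

noncomputable def Kp (a b c : S.M) : S.M →₀ ℝ :=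
  ∑ v : S.Pos a, ∑ u : S.Pos a, S.Dp a b c v u

lemma Kp_symm (a b c : S.M) : S.Kp a b c = S.Kp a c b := by
  unfold Kp
  simp_rw [Dp_symm]
  exact Finset.sum_comm

noncomputable def G (a b c : S.M) : S.M →₀ ℝ :=
  ∑ v : S.Pos a, ∑ w : S.Pos b, Finsupp.single (S.star a (S.star b c w) v) (1 : ℝ)

open scoped Classical in
lemma sum_Dp (a b c : S.M) (v : S.Pos a) :
    ∑ u : S.Pos a, S.Dp a b c v u =
      ∑ u : {u : S.Pos a // u ≠ v}, Finsupp.single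
        (S.star (S.star a b v) c ((S.vertEquiv a b v).symm (Sum.inl u))) (1 : ℝ) := by
  rw [← Fintype.sum_subtype_add_sum_subtype (· ≠ v) (S.Dp a b c v)]
  have h2 : ∀ u : {u : S.Pos a // ¬ u ≠ v}, S.Dp a b c v u = 0 := by
    intro u; simp [Dp, u.2]
  have h1 : ∀ u : {u : S.Pos a // u ≠ v}, S.Dp a b c v u = Finsupp.single
      (S.star (S.star a b v) c ((S.vertEquiv a b v).symm (Sum.inl u))) (1 : ℝ) := by
    intro u
    rw [Dp, dif_pos u.2]
  simp only [h1, h2, Finset.sum_const_zero, add_zero]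

lemma sum_P_left (a b c : S.M) :
    ∑ v : S.Pos a, S.P (S.star a b v) c = S.Kp a b c + S.G a b c := by
  classical
  unfold P Kp G
  rw [← Finset.sum_add_distrib]
  apply Finset.sum_congr rfl
  intro v _
  rw [← Equiv.sum_comp (S.vertEquiv a b v).symm
    (fun u => Finsupp.single (S.star (S.star a b v) c u) (1 : ℝ)), Fintype.sum_sum_type]
  congr 1
  · rw [sum_Dp]
  · exact Finset.sum_congr rfl fun w _ => by rw [S.assoc]

lemma sum_P_right (a b c : S.M) :
    ∑ v : S.Pos a, S.P c (S.star a b v) = S.G c a b := by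
  unfold P G
  exact Finset.sum_comm

lemma expand (a b c : S.M) :
    S.Bmap (S.brkt a b) (Finsupp.single c 1) =
      (S.Kp a b c + S.G a b c - S.G c a b) - (S.Kp b a c + S.G b a c - S.G c b a) := by
  rw [brkt_eq, map_sub, LinearMap.sub_apply]
  have key : ∀ x y : S.M, S.Bmap (S.P x y) (Finsupp.single c 1)
      = S.Kp x y c + S.G x y c - S.G c x y := by
    intro x y
    rw [P, map_sum, LinearMap.sum_apply]
    have : ∀ v : S.Pos x, S.Bmap (Finsupp.single (S.star x y v) 1) (Finsupp.single c 1)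
        = S.P (S.star x y v) c - S.P c (S.star x y v) := by
      intro v; rw [Bmap_single_single, brkt_eq]
    rw [Finset.sum_congr rfl (fun v _ => this v), Finset.sum_sub_distrib,
      sum_P_left, sum_P_right]
  rw [key, key]

lemma jacobi_gen (a b c : S.M) :
    S.Bmap (S.brkt a b) (Finsupp.single c 1) + S.Bmap (S.brkt b c) (Finsupp.single a 1) +
      S.Bmap (S.brkt c a) (Finsupp.single b 1) = 0 := by
  rw [expand, expand, expand, S.Kp_symm a b c, S.Kp_symm b c a, S.Kp_symm c a b]
  abel

lemma single_eq_smul (a : S.M) (r : ℝ) :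
    (Finsupp.single a r : S.M →₀ ℝ) = r • Finsupp.single a 1 := by
  rw [Finsupp.smul_single, smul_eq_mul, mul_one]

lemma Bmap_anti (x y : S.M →₀ ℝ) : S.Bmap x y = - S.Bmap y x := by
  induction x using Finsupp.induction_linear with
  | zero => simp
  | add f g hf hg => simp only [map_add, LinearMap.add_apply, hf, hg]; abel
  | single a r =>
    induction y using Finsupp.induction_linear with
    | zero => simp
    | add f g hf hg => simp only [map_add, LinearMap.add_apply, hf, hg]; abel
    | single b s =>
      rw [single_eq_smul S a r, single_eq_smul S b s]
      simp only [map_smul, LinearMap.smul_apply, Bmap_single_single]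
      rw [S.brkt_anti a b]
      simp [smul_smul, mul_comm]

lemma Bmap_jacobi (x y z : S.M →₀ ℝ) :
    S.Bmap (S.Bmap x y) z + S.Bmap (S.Bmap y z) x + S.Bmap (S.Bmap z x) y = 0 := by
  induction x using Finsupp.induction_linear with
  | zero => simp
  | add f g hf hg =>
    have h : (S.Bmap (S.Bmap f y) z + S.Bmap (S.Bmap y z) f + S.Bmap (S.Bmap z f) y)
        + (S.Bmap (S.Bmap g y) z + S.Bmap (S.Bmap y z) g + S.Bmap (S.Bmap z g) y) = 0 := by
      rw [hf, hg, add_zero]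
    simp only [map_add, LinearMap.add_apply]
    rw [← h]; abel
  | single a r =>
    induction y using Finsupp.induction_linear with
    | zero => simp
    | add f g hf hg =>
      have h : (S.Bmap (S.Bmap (Finsupp.single a r) f) z
            + S.Bmap (S.Bmap f z) (Finsupp.single a r)
            + S.Bmap (S.Bmap z (Finsupp.single a r)) f)
          + (S.Bmap (S.Bmap (Finsupp.single a r) g) z
            + S.Bmap (S.Bmap g z) (Finsupp.single a r)
            + S.Bmap (S.Bmap z (Finsupp.single a r)) g) = 0 := by
        rw [hf, hg, add_zero]
      simp only [map_add, LinearMap.add_apply]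
      rw [← h]; abel
    | single b s =>
      induction z using Finsupp.induction_linear with
      | zero => simp
      | add f g hf hg =>
        have h : (S.Bmap (S.Bmap (Finsupp.single a r) (Finsupp.single b s)) f
              + S.Bmap (S.Bmap (Finsupp.single b s) f) (Finsupp.single a r)
              + S.Bmap (S.Bmap f (Finsupp.single a r)) (Finsupp.single b s))
            + (S.Bmap (S.Bmap (Finsupp.single a r) (Finsupp.single b s)) g
              + S.Bmap (S.Bmap (Finsupp.single b s) g) (Finsupp.single a r)
              + S.Bmap (S.Bmap g (Finsupp.single a r)) (Finsupp.single b s)) = 0 := by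
          rw [hf, hg, add_zero]
        simp only [map_add, LinearMap.add_apply]
        rw [← h]; abel
      | single c t =>
        rw [single_eq_smul S a r, single_eq_smul S b s, single_eq_smul S c t]
        simp only [map_smul, LinearMap.smul_apply, Bmap_single_single]
        have h := S.jacobi_gen a b c
        rw [show (0 : S.M →₀ ℝ) = (r * s * t) •
            (S.Bmap (S.brkt a b) (Finsupp.single c 1) +
              S.Bmap (S.brkt b c) (Finsupp.single a 1) +
              S.Bmap (S.brkt c a) (Finsupp.single b 1)) by rw [h, smul_zero]]
        module

end ContractionSystem

/-- The bubble bracket is antisymmetric and satisfies the Jacobi identity, so the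
free real vector space on marked `D`-colored graphs is a Lie algebra. -/
theorem bubble_bracket_lie_algebra (S : ContractionSystem) (x y z : S.M →₀ ℝ) :
    S.bra x y = -S.bra y x ∧
    S.bra (S.bra x y) z + S.bra (S.bra y z) x + S.bra (S.bra z x) y = 0 := by
  refine ⟨?_, ?_⟩
  · rw [S.bra_eq, S.bra_eq, S.Bmap_anti]
  · simp only [S.bra_eq]
    exact S.Bmap_jacobi x y z
end

section
/- The colored boundary operator satisfies ∂_{d-1} ∘ ∂_d = 0 for all d ≥ 2, where ∂_d sends a d-bubble to the alternating sum over color positions q of all its (d-1)-bubbles omitting color i_q. -/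
open scoped Classical

/-- A closed `(D+1)`-colored graph, encoded by its total vertex set `Ω` together
with, for each color `i ∈ {0,…,D}`, the fixed-point-free involution `μ i` matching
each vertex to the other endpoint of its unique edge of color `i`. -/
structure CGraph (D : ℕ) where
  Ω : Type
  [finΩ : Fintype Ω]
  μ : Fin (D + 1) → Ω → Ω
  invol : ∀ i, Function.Involutive (μ i)
  fpf : ∀ i x, μ i x ≠ x

attribute [instance] CGraph.finΩ

variable {D : ℕ}

/-- Two vertices are equivalent for the color set `s` iff they are joined by a path
of edges with colors in `s`. -/
def CGraph.bubbleSetoid (G : CGraph D) (s : Finset (Fin (D + 1))) : Setoid G.Ω :=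
  ⟨Relation.EqvGen (fun x y => ∃ i ∈ s, G.μ i x = y), Relation.EqvGen.is_equivalence _⟩

/-- The `d`-bubbles of colors `s` (with `d = s.card`): connected components of the
subgraph with edge colors in `s`. -/
def CGraph.Bubble (G : CGraph D) (s : Finset (Fin (D + 1))) : Type :=
  Quotient (G.bubbleSetoid s)

noncomputable instance (G : CGraph D) (s : Finset (Fin (D + 1))) : Fintype (G.Bubble s) :=
  @Quotient.fintype _ _ (G.bubbleSetoid s) (fun _ _ => Classical.propDecidable _)

/-- Each bubble with colors `s' ⊆ s` is contained in a unique bubble with colors `s`. -/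
def CGraph.coarsen (G : CGraph D) {s' s : Finset (Fin (D + 1))} (h : s' ⊆ s) :
    G.Bubble s' → G.Bubble s :=
  Quotient.map' id (fun a b hab => by
    have hab' : Relation.EqvGen (fun x y => ∃ i ∈ s', G.μ i x = y) a b := hab
    show Relation.EqvGen _ a b
    refine Relation.EqvGen.mono ?_ a b hab'
    rintro x y ⟨i, hi, e⟩
    exact ⟨i, h hi, e⟩)

/-- The sign `(−1)^{q+1}` attached to removing the `q`-th color `i` of the ordered
color set `s = {i₁ < … < i_d}`. -/
def csign (s : Finset (Fin (D + 1))) (i : Fin (D + 1)) : ℤ :=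
  (-1) ^ (s.filter (· < i)).card

/-- The chain groups: formal `ℤ`-linear combinations of bubbles. -/
abbrev CGraph.Chain (G : CGraph D) : Type :=
  (Σ s : Finset (Fin (D + 1)), G.Bubble s) →₀ ℤ

/-- The colored boundary operator on a generator: a `d`-bubble is sent to the
alternating sum, over the positions `q` of its colors, of all the `(d−1)`-bubbles
(omitting the color `i_q`) contained in it. -/
noncomputable def CGraph.bnd (G : CGraph D) (a : Σ s : Finset (Fin (D + 1)), G.Bubble s) :
    G.Chain :=
  ∑ i ∈ a.1, csign a.1 i •
    ∑ c : G.Bubble (a.1.erase i),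
      if G.coarsen (Finset.erase_subset i a.1) c = a.2 then
        Finsupp.single ⟨a.1.erase i, c⟩ (1 : ℤ) else 0

/-- The linear extension of the boundary operator to chains. -/
noncomputable def CGraph.Bnd (G : CGraph D) (x : G.Chain) : G.Chain :=
  x.sum fun a n => n • G.bnd a

namespace ColoredBndAux

variable (G : CGraph D)

/-- The sum of the `s'`-bubbles contained in the `s`-bubble `c`. -/
noncomputable def F {s' s : Finset (Fin (D + 1))} (h : s' ⊆ s) (c : G.Bubble s) : G.Chain :=
  ∑ c' : G.Bubble s', if G.coarsen h c' = c then Finsupp.single ⟨s', c'⟩ (1 : ℤ) else 0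

lemma F_congr {s₁ s₂ s : Finset (Fin (D + 1))} (e : s₁ = s₂) (h₁ : s₁ ⊆ s) (h₂ : s₂ ⊆ s)
    (c : G.Bubble s) : F G h₁ c = F G h₂ c := by subst e; rfl

lemma coarsen_coarsen {s'' s' s : Finset (Fin (D + 1))} (h' : s'' ⊆ s') (h : s' ⊆ s)
    (x : G.Bubble s'') : G.coarsen h (G.coarsen h' x) = G.coarsen (h'.trans h) x := by
  induction x using Quotient.inductionOn'
  rfl

lemma bnd_eq (s : Finset (Fin (D + 1))) (c : G.Bubble s) :
    G.bnd ⟨s, c⟩ = ∑ i ∈ s, csign s i • F G (Finset.erase_subset i s) c := rfl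

/-- The boundary as a linear map. -/
noncomputable def LBnd : G.Chain →ₗ[ℤ] G.Chain :=
  Finsupp.lsum ℤ fun a => LinearMap.toSpanSingleton ℤ _ (G.bnd a)

lemma Bnd_eq (x : G.Chain) : G.Bnd x = LBnd G x := rfl

lemma LBnd_single (a : Σ s : Finset (Fin (D + 1)), G.Bubble s) :
    LBnd G (Finsupp.single a 1) = G.bnd a := by
  simp [LBnd]

lemma LBnd_F {s' s : Finset (Fin (D + 1))} (h : s' ⊆ s) (c : G.Bubble s) :
    LBnd G (F G h c) = ∑ c' : G.Bubble s', if G.coarsen h c' = c then G.bnd ⟨s', c'⟩ else 0 := by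
  rw [F, map_sum]
  refine Finset.sum_congr rfl fun c' _ => ?_
  split_ifs with hP
  · exact LBnd_single G _
  · simp

lemma sum_F {s'' s' s : Finset (Fin (D + 1))} (h' : s'' ⊆ s') (h : s' ⊆ s) (c : G.Bubble s) :
    ∑ c' : G.Bubble s', (if G.coarsen h c' = c then F G h' c' else 0)
      = F G (h'.trans h) c := by
  unfold F
  have step : ∀ c' : G.Bubble s',
      (if G.coarsen h c' = c then
          ∑ c'' : G.Bubble s'',
            (if G.coarsen h' c'' = c' then
              Finsupp.single (⟨s'', c''⟩ : Σ u : Finset (Fin (D + 1)), G.Bubble u) (1 : ℤ)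
            else 0)
        else 0)
      = ∑ c'' : G.Bubble s'',
          (if G.coarsen h' c'' = c' then
            (if G.coarsen h c' = c then
              Finsupp.single (⟨s'', c''⟩ : Σ u : Finset (Fin (D + 1)), G.Bubble u) (1 : ℤ)
            else 0)
          else 0) := by
    intro c'; split_ifs with hP <;> simp [hP]
  rw [Finset.sum_congr rfl fun c' _ => step c', Finset.sum_comm]
  refine Finset.sum_congr rfl fun c'' _ => ?_
  rw [← coarsen_coarsen G h' h]
  rw [Finset.sum_ite_eq Finset.univ (G.coarsen h' c'')]
  simp

lemma csign_mul_anti {s : Finset (Fin (D + 1))} {i j : Fin (D + 1)} (hj : j ∈ s) (hlt : j < i) :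
    csign s i * csign (s.erase i) j = -(csign s j * csign (s.erase j) i) := by
  have h1 : (s.erase i).filter (· < j) = s.filter (· < j) := by
    rw [Finset.filter_erase, Finset.erase_eq_of_notMem]
    simp [not_lt.mpr hlt.le]
  have hjmem : j ∈ s.filter (· < i) := by simp [hj, hlt]
  have h2 : ((s.erase j).filter (· < i)).card = (s.filter (· < i)).card - 1 := by
    rw [Finset.filter_erase, Finset.card_erase_of_mem hjmem]
  have h3 : 1 ≤ (s.filter (· < i)).card := Finset.card_pos.mpr ⟨j, hjmem⟩
  obtain ⟨k, hk⟩ : ∃ k, (s.filter (· < i)).card = k + 1 :=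
    ⟨(s.filter (· < i)).card - 1, by omega⟩
  unfold csign
  rw [h1, h2, hk, Nat.add_sub_cancel, pow_succ]
  ring

lemma csign_anti {s : Finset (Fin (D + 1))} {i j : Fin (D + 1)} (hi : i ∈ s) (hj : j ∈ s)
    (hne : i ≠ j) :
    csign s i * csign (s.erase i) j + csign s j * csign (s.erase j) i = 0 := by
  rcases lt_or_gt_of_ne hne with h | h
  · rw [csign_mul_anti hi h]; ring
  · rw [csign_mul_anti hj h]; ring

end ColoredBndAux

open ColoredBndAux in
/-- `∂_{d−1} ∘ ∂_d = 0` for all `d ≥ 2`: the colored boundary operators define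
a homology. -/
theorem colored_boundary_squared_zero (D : ℕ) (G : CGraph D)
    (s : Finset (Fin (D + 1))) (c : G.Bubble s) (hd : 2 ≤ s.card) :
    G.Bnd (G.bnd ⟨s, c⟩) = 0 := by
  classical
  set t : Fin (D + 1) → Fin (D + 1) → G.Chain := fun i j =>
    (csign s i * csign (s.erase i) j) •
      F G ((Finset.erase_subset j (s.erase i)).trans (Finset.erase_subset i s)) c with ht
  have key : G.Bnd (G.bnd ⟨s, c⟩) = ∑ i ∈ s, ∑ j ∈ s.erase i, t i j := by
    rw [Bnd_eq, bnd_eq, map_sum]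
    refine Finset.sum_congr rfl fun i hi => ?_
    rw [map_smul, LBnd_F]
    have expand : ∀ c' : G.Bubble (s.erase i),
        (if G.coarsen (Finset.erase_subset i s) c' = c then G.bnd ⟨s.erase i, c'⟩ else 0)
        = ∑ j ∈ (s.erase i), csign (s.erase i) j •
            (if G.coarsen (Finset.erase_subset i s) c' = c then
              F G (Finset.erase_subset j (s.erase i)) c' else 0) := by
      intro c'
      split_ifs with hP
      · rw [bnd_eq]
      · simp
    rw [Finset.sum_congr rfl fun c' _ => expand c', Finset.sum_comm, Finset.smul_sum]
    refine Finset.sum_congr rfl fun j hj => ?_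
    rw [← Finset.smul_sum, sum_F, ht]
    simp only [mul_smul]
  rw [key]
  set S : G.Chain := ∑ i ∈ s, ∑ j ∈ s.erase i, t i j with hS
  have hswap : S = ∑ i ∈ s, ∑ j ∈ s.erase i, t j i := by
    rw [hS]
    exact Finset.sum_comm' (s := s) (t := fun i => s.erase i) (t' := s)
      (s' := fun j => s.erase j) (fun x y => by
        simp only [Finset.mem_erase]
        constructor
        · rintro ⟨hx, hyx, hy⟩; exact ⟨⟨Ne.symm hyx, hx⟩, hy⟩
        · rintro ⟨⟨hxy, hx⟩, hy⟩; exact ⟨hx, Ne.symm hxy, hy⟩)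
  have hcancel : ∀ i ∈ s, ∀ j ∈ s.erase i, t i j + t j i = 0 := by
    intro i hi j hjmem
    rw [Finset.mem_erase] at hjmem
    obtain ⟨hji, hj⟩ := hjmem
    have hF : F G ((Finset.erase_subset i (s.erase j)).trans (Finset.erase_subset j s)) c
        = F G ((Finset.erase_subset j (s.erase i)).trans (Finset.erase_subset i s)) c :=
      F_congr G (Finset.erase_right_comm) _ _ c
    rw [ht]
    simp only
    rw [hF, ← add_smul, csign_anti hi hj (Ne.symm hji), zero_smul]
  have hzero : S + S = 0 := by
    nth_rewrite 2 [hswap]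
    rw [hS, ← Finset.sum_add_distrib]
    rw [Finset.sum_congr rfl fun i hi => (Finset.sum_add_distrib).symm]
    rw [Finset.sum_congr rfl fun i hi =>
      Finset.sum_congr rfl fun j hj => hcancel i hi j hj]
    simp
  ext a
  have h := DFunLike.congr_fun hzero a
  simp only [Finsupp.add_apply, Finsupp.coe_zero, Pi.zero_apply] at h ⊢
  omega
end

section
/- Let f: [0,1] → ℝ be continuous with f(0) = f(1) = 0 and f(t) ≥ 0. Define m_f(s,t) = inf of f on the interval between s and t, and d_f(s,t) = f(s) + f(t) − 2m_f(s,t). Then d_f is a pseudometric on [0,1]: it is nonnegative, symmetric, vanishes on the diagonal, and satisfies the triangle inequality. -/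
open Set

/-- `m_f(s,t)`: the infimum of `f` on the closed interval between `s` and `t`. -/
noncomputable def excursionMin (f : ℝ → ℝ) (s t : ℝ) : ℝ := sInf (f '' Set.uIcc s t)

/-- The excursion pseudo-distance `d_f(s,t) = f(s) + f(t) − 2 m_f(s,t)`. -/
noncomputable def excursionDist (f : ℝ → ℝ) (s t : ℝ) : ℝ :=
  f s + f t - 2 * excursionMin f s t

lemma excursionMin_le {f : ℝ → ℝ} {s t : ℝ} (hf : ContinuousOn f (uIcc s t)) {x : ℝ}
    (hx : x ∈ uIcc s t) : excursionMin f s t ≤ f x :=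
  csInf_le (isCompact_uIcc.image_of_continuousOn hf).bddBelow ⟨x, hx, rfl⟩

lemma excursionMin_comm (f : ℝ → ℝ) (s t : ℝ) :
    excursionMin f s t = excursionMin f t s := by
  unfold excursionMin; rw [uIcc_comm]

/-- For a continuous nonnegative excursion `f` on `[0,1]` with `f(0) = f(1) = 0`,
`d_f` is a pseudometric on `[0,1]`: nonnegative, symmetric, vanishing on the
diagonal, and satisfying the triangle inequality. -/
theorem excursionDist_pseudometric (f : ℝ → ℝ)
    (hf : ContinuousOn f (Icc 0 1)) (h0 : f 0 = 0) (h1 : f 1 = 0)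
    (hpos : ∀ t ∈ Icc (0 : ℝ) 1, 0 ≤ f t) :
    (∀ s ∈ Icc (0 : ℝ) 1, ∀ t ∈ Icc (0 : ℝ) 1, 0 ≤ excursionDist f s t) ∧
    (∀ s ∈ Icc (0 : ℝ) 1, ∀ t ∈ Icc (0 : ℝ) 1, excursionDist f s t = excursionDist f t s) ∧
    (∀ s ∈ Icc (0 : ℝ) 1, excursionDist f s s = 0) ∧
    (∀ s ∈ Icc (0 : ℝ) 1, ∀ t ∈ Icc (0 : ℝ) 1, ∀ u ∈ Icc (0 : ℝ) 1,
      excursionDist f s u ≤ excursionDist f s t + excursionDist f t u) := by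
  have hsub : ∀ s ∈ Icc (0 : ℝ) 1, ∀ t ∈ Icc (0 : ℝ) 1, uIcc s t ⊆ Icc 0 1 :=
    fun s hs t ht => uIcc_subset_Icc hs ht
  have hcont : ∀ s ∈ Icc (0 : ℝ) 1, ∀ t ∈ Icc (0 : ℝ) 1, ContinuousOn f (uIcc s t) :=
    fun s hs t ht => hf.mono (hsub s hs t ht)
  have hle : ∀ s ∈ Icc (0 : ℝ) 1, ∀ t ∈ Icc (0 : ℝ) 1,
      excursionMin f s t ≤ f s ∧ excursionMin f s t ≤ f t := fun s hs t ht =>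
    ⟨excursionMin_le (hcont s hs t ht) left_mem_uIcc,
     excursionMin_le (hcont s hs t ht) right_mem_uIcc⟩
  refine ⟨fun s hs t ht => ?_, fun s hs t ht => ?_, fun s hs => ?_, fun s hs t ht u hu => ?_⟩
  · have h := hle s hs t ht
    unfold excursionDist; linarith [h.1, h.2]
  · unfold excursionDist; rw [excursionMin_comm]; ring
  · unfold excursionDist excursionMin
    rw [uIcc_self, image_singleton, csInf_singleton]; ring
  · -- min(m st, m tu) ≤ m su
    have hmin : min (excursionMin f s t) (excursionMin f t u) ≤ excursionMin f s u := by
      apply le_csInf ((nonempty_uIcc).image f)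
      rintro b ⟨x, hx, rfl⟩
      rcases uIcc_subset_uIcc_union_uIcc (b := t) hx with h | h
      · exact le_trans (min_le_left _ _) (excursionMin_le (hcont s hs t ht) h)
      · exact le_trans (min_le_right _ _) (excursionMin_le (hcont t ht u hu) h)
    have h1 := (hle s hs t ht).2
    have h2 := (hle t ht u hu).1
    unfold excursionDist
    rcases min_le_iff.mp (le_refl (min (excursionMin f s t) (excursionMin f t u))) with _ | _
    all_goals rcases le_total (excursionMin f s t) (excursionMin f t u) with h | h
    all_goals simp [min_eq_left, min_eq_right, h] at hmin <;> linarith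
end
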